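/- Let π be a continuous, strictly positive probability density on ℝ with CDF Π and finite second moment, and suppose π is log-concave. Then the function w(y) = y²(1 − Π(y)) has a unique critical point y* in (0,∞) satisfying 2(1 − Π(y*)) = y* π(y*), and y* is the global maximizer of w on [0, ∞). -/

import Mathlib

open MeasureTheory Set Filter Topology

/-- Translation identity for tail integrals. -/
lemma tail_translate (π : ℝ → ℝ) (c x : ℝ) :
    ∫ t in Set.Ioi (x - c), π (t + c) = ∫ s in Set.Ioi x, π s := by
  have h := (measurePreserving_add_right (volume : Measure ℝ) c).setIntegral_preimage_emb
    (MeasurableEquiv.addRight c).measurableEmbedding π (Set.Ioi x)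
  simpa [Set.preimage_add_const_Ioi] using h

/-- Hazard-rate monotonicity from log-concavity. -/
lemma hazard_mono (π : ℝ → ℝ) (hpos : ∀ x, 0 < π x)
    (hlc : ConcaveOn ℝ Set.univ (fun x => Real.log (π x)))
    (hint : Integrable π) {x y : ℝ} (hxy : x ≤ y) :
    π x * ∫ t in Set.Ioi y, π t ≤ π y * ∫ t in Set.Ioi x, π t := by
  rcases eq_or_lt_of_le hxy with rfl | hxy
  · exact le_refl _
  have key : ∀ t ∈ Set.Ioi y, π x * π t ≤ π y * π (t + (x - y)) := by
    intro t ht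
    have hyt : y < t := ht
    have hxt : x < t := hxy.trans hyt
    set a : ℝ := (t - y) / (t - x) with ha_def
    set b : ℝ := (y - x) / (t - x) with hb_def
    have htx : 0 < t - x := by linarith
    have ha : 0 ≤ a := div_nonneg (by linarith) htx.le
    have hb : 0 ≤ b := div_nonneg (by linarith) htx.le
    have hab : a + b = 1 := by
      rw [ha_def, hb_def, ← add_div]
      rw [show t - y + (y - x) = t - x by ring, div_self htx.ne']
    have h1 : a • x + b • t = y := by
      simp only [smul_eq_mul, ha_def, hb_def]; field_simp; ring
    have h2 : b • x + a • t = t + (x - y) := by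
      simp only [smul_eq_mul, ha_def, hb_def]; field_simp; ring
    have c1 := hlc.2 (Set.mem_univ x) (Set.mem_univ t) ha hb hab
    have c2 := hlc.2 (Set.mem_univ x) (Set.mem_univ t) hb ha (by linarith)
    rw [h1] at c1
    rw [h2] at c2
    have hsum : Real.log (π x) + Real.log (π t)
        ≤ Real.log (π y) + Real.log (π (t + (x - y))) := by
      have hcomb : Real.log (π x) + Real.log (π t) =
          (a * Real.log (π x) + b * Real.log (π t))
          + (b * Real.log (π x) + a * Real.log (π t)) := by
        linear_combination (Real.log (π x) + Real.log (π t)) * hab.symm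
      simp only [smul_eq_mul] at c1 c2
      linarith
    have hexp := Real.exp_le_exp.mpr hsum
    rwa [Real.exp_add, Real.exp_add, Real.exp_log (hpos _), Real.exp_log (hpos _),
      Real.exp_log (hpos _), Real.exp_log (hpos _)] at hexp
  have htransInt : Integrable (fun t => π (t + (x - y))) volume :=
    ((measurePreserving_add_right volume (x - y)).integrable_comp
      hint.aestronglyMeasurable).mpr hint
  calc π x * ∫ t in Set.Ioi y, π t = ∫ t in Set.Ioi y, π x * π t := by
        rw [MeasureTheory.integral_const_mul]
    _ ≤ ∫ t in Set.Ioi y, π y * π (t + (x - y)) := by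
        apply setIntegral_mono_on (hint.integrableOn.const_mul _)
          (htransInt.integrableOn.const_mul _) measurableSet_Ioi key
    _ = π y * ∫ t in Set.Ioi y, π (t + (x - y)) := by
        rw [MeasureTheory.integral_const_mul]
    _ = π y * ∫ s in Set.Ioi x, π s := by
        have := tail_translate π (x - y) x
        rw [show x - (x - y) = y by ring] at this
        rw [this]

theorem unique_critical_point_global_max
    (π : ℝ → ℝ) (hcont : Continuous π) (hpos : ∀ x, 0 < π x)
    (hlc : ConcaveOn ℝ Set.univ (fun x => Real.log (π x)))
    (hint : Integrable π) (hone : ∫ x, π x = 1)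
    (hmom : Integrable (fun x => x ^ 2 * π x)) :
    ∃ ystar : ℝ, 0 < ystar ∧
      2 * (1 - ∫ t in Set.Iic ystar, π t) = ystar * π ystar ∧
      (∀ y : ℝ, 0 < y → 2 * (1 - ∫ t in Set.Iic y, π t) = y * π y → y = ystar) ∧
      (∀ y : ℝ, 0 ≤ y →
        y ^ 2 * (1 - ∫ t in Set.Iic y, π t)
          ≤ ystar ^ 2 * (1 - ∫ t in Set.Iic ystar, π t)) := by
  set F : ℝ → ℝ := fun y => ∫ t in Set.Iic y, π t with hFdef
  set G : ℝ → ℝ := fun y => ∫ t in Set.Ioi y, π t with hGdef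
  set w : ℝ → ℝ := fun y => y ^ 2 * (1 - F y) with hwdef
  have hFG : ∀ y, 1 - F y = G y := by
    intro y
    have h := intervalIntegral.integral_Iic_add_Ioi (b := y) hint.integrableOn hint.integrableOn
    rw [hone] at h
    simp only [hFdef, hGdef]
    linarith
  have hGpos : ∀ y, 0 < G y := by
    intro y
    rw [hGdef]
    rw [setIntegral_pos_iff_support_of_nonneg_ae
      (Eventually.of_forall fun x => (hpos x).le) hint.integrableOn]
    have hsupp : Function.support π = Set.univ :=
      Set.eq_univ_of_forall fun x => (hpos x).ne'
    rw [hsupp, Set.univ_inter, Real.volume_Ioi]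
    exact ENNReal.zero_lt_top
  have hFderiv : ∀ y, HasDerivAt F (π y) y := by
    intro y
    have hd : HasDerivAt (fun u => ∫ t in (0:ℝ)..u, π t) (π y) y :=
      intervalIntegral.integral_hasDerivAt_right hint.intervalIntegrable
        (hcont.stronglyMeasurableAtFilter _ _) hcont.continuousAt
    have heq : ∀ u, (∫ t in (0:ℝ)..u, π t) + F 0 = F u := by
      intro u
      have := intervalIntegral.integral_Iic_sub_Iic (hint.integrableOn (s := Set.Iic 0))
        (hint.integrableOn (s := Set.Iic u))
      simp only [hFdef]
      linarith
    exact (hd.add_const (F 0)).congr_of_eventuallyEq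
      (Eventually.of_forall fun u => (heq u).symm)
  have hwderiv : ∀ y, HasDerivAt w (2 * y * (1 - F y) - y ^ 2 * π y) y := by
    intro y
    have h1 : HasDerivAt (fun u : ℝ => u ^ 2) (2 * y) y := by
      simpa using hasDerivAt_pow 2 y
    have h2 : HasDerivAt (fun u => 1 - F u) (-π y) y := by
      simpa using (hFderiv y).const_sub 1
    have := h1.mul h2
    exact this.congr_deriv (by ring)
  have hFcont : Continuous F :=
    continuous_iff_continuousAt.mpr fun y => (hFderiv y).continuousAt
  have hwcont : Continuous w := by
    exact (continuous_pow 2).mul (continuous_const.sub hFcont)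
  -- tail bound
  have htail : Tendsto w atTop (𝓝 0) := by
    have hcov : AECover (volume : Measure ℝ) atTop (fun i : ℝ => Set.Iic i) :=
      aecover_Iic tendsto_id
    have h1 : Tendsto (fun y : ℝ => ∫ t in Set.Iic y, t ^ 2 * π t) atTop
        (𝓝 (∫ t, t ^ 2 * π t)) := hcov.integral_tendsto_of_countably_generated hmom
    have h2 : Tendsto (fun y : ℝ => ∫ t in Set.Ioi y, t ^ 2 * π t) atTop (𝓝 0) := by
      have h3 := (tendsto_const_nhds (x := ∫ t, t ^ 2 * π t) (f := atTop)).sub h1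
      rw [sub_self] at h3
      apply h3.congr
      intro y
      have := intervalIntegral.integral_Iic_add_Ioi (b := y) hmom.integrableOn hmom.integrableOn
      linarith
    apply tendsto_of_tendsto_of_tendsto_of_le_of_le' tendsto_const_nhds h2
    · filter_upwards [eventually_ge_atTop (0:ℝ)] with y hy
      rw [hwdef]
      simp only
      rw [hFG y]
      exact mul_nonneg (by positivity) (hGpos y).le
    · filter_upwards [eventually_ge_atTop (0:ℝ)] with y hy
      have heq : w y = ∫ t in Set.Ioi y, y ^ 2 * π t := by
        rw [MeasureTheory.integral_const_mul, hwdef]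
        simp only
        rw [hFG y, hGdef]
      rw [heq]
      apply setIntegral_mono_on (hint.integrableOn.const_mul _) hmom.integrableOn
        measurableSet_Ioi
      intro t ht
      have hyt : y < t := ht
      have : y ^ 2 ≤ t ^ 2 := by nlinarith
      nlinarith [(hpos t).le]
  have hw1 : 0 < w 1 := by
    rw [hwdef]; simp only [one_pow, one_mul]
    rw [hFG 1]; exact hGpos 1
  obtain ⟨R0, hR0⟩ := eventually_atTop.mp (htail.eventually_lt_const hw1)
  set R : ℝ := max R0 2 with hRdef
  have hR2 : (2:ℝ) ≤ R := le_max_right _ _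
  have hRsmall : ∀ y, R ≤ y → w y < w 1 := fun y hy =>
    hR0 y (le_trans (le_max_left _ _) hy)
  obtain ⟨y0, hy0mem, hy0max⟩ := isCompact_Icc.exists_isMaxOn
    (⟨1, by constructor <;> [norm_num; linarith]⟩ : (Set.Icc (0:ℝ) R).Nonempty)
    hwcont.continuousOn
  have h1mem : (1:ℝ) ∈ Set.Icc (0:ℝ) R := by constructor <;> [norm_num; linarith]
  have hwy0 : w 1 ≤ w y0 := hy0max h1mem
  have hy0pos : 0 < y0 := by
    rcases hy0mem.1.lt_or_eq with h | h
    · exact h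
    · exfalso
      have : w y0 = 0 := by rw [← h, hwdef]; simp
      linarith
  have hy0ltR : y0 < R := by
    rcases hy0mem.2.lt_or_eq with h | h
    · exact h
    · exfalso
      have := hRsmall y0 h.ge
      linarith
  have hloc : IsLocalMax w y0 := hy0max.isLocalMax (Icc_mem_nhds hy0pos hy0ltR)
  have hder0 := hloc.hasDerivAt_eq_zero (hwderiv y0)
  have hFOC : 2 * (1 - F y0) = y0 * π y0 := by
    have hy0 : y0 ≠ 0 := hy0pos.ne'
    have : y0 * (2 * (1 - F y0)) = y0 * (y0 * π y0) := by ring_nf; ring_nf at hder0; linarith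
    exact mul_left_cancel₀ hy0 this
  -- uniqueness helper
  have hkey : ∀ a b : ℝ, 0 < a → a < b → 2 * (1 - F a) = a * π a →
      2 * (1 - F b) = b * π b → False := by
    intro a b hapos hab ea eb
    have hz : π a * G b ≤ π b * G a := hazard_mono π hpos hlc hint hab.le
    have e1 : a * π a = 2 * G a := by rw [← ea, hFG]
    have e2 : b * π b = 2 * G b := by rw [← eb, hFG]
    have h3 : a * b * (π a * G b) ≤ a * b * (π b * G a) :=
      mul_le_mul_of_nonneg_left hz (mul_nonneg hapos.le (hapos.trans hab).le)
    have h5 : b * (a * π a) * G b ≤ a * (b * π b) * G a := by linarith [h3]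
    rw [e1, e2] at h5
    nlinarith [h5, mul_pos (sub_pos.mpr hab) (mul_pos (hGpos a) (hGpos b))]
  refine ⟨y0, hy0pos, hFOC, ?_, ?_⟩
  · intro y hy hfoc
    rcases lt_trichotomy y y0 with h | h | h
    · exact absurd (hkey y y0 hy h hfoc hFOC) (not_false)
    · exact h
    · exact absurd (hkey y0 y hy0pos h hFOC hfoc) (not_false)
  · intro y hy
    by_cases hyR : y ≤ R
    · exact hy0max ⟨hy, hyR⟩
    · have := hRsmall y (le_of_not_ge hyR)
      have : w y ≤ w y0 := le_trans this.le hwy0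
      exact this
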